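/- An infinite matrix A = (a_{nk}) of real numbers maps ℓ∞(F) into ℓ∞(F) (i.e., for every bounded sequence û of triangular fuzzy numbers, A û is defined and bounded) if and only if sup_n Σ_k d̄(a_{nk}·δₖ, θ) < ∞, equivalently sup_n Σ_k |a_{nk}| < ∞. -/

import Mathlib

open scoped ENNReal


/-- The distance `d̄(u,v) = max {|u - v - t₁|, |u - v|, |u - v + t₂|}`. -/
def dbar (t₁ t₂ u v : ℝ) : ℝ := max |u - v - t₁| (max |u - v| |u - v + t₂|)

/-- `ℓ∞(F)`: bounded sequences of triangular fuzzy numbers (via middle points). -/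
def linfF (t₁ t₂ : ℝ) : Set (ℕ → ℝ) := {u | ∃ M : ℝ, ∀ k, dbar t₁ t₂ (u k) 0 ≤ M}

lemma abs_le_dbar (t₁ t₂ x : ℝ) : |x| ≤ dbar t₁ t₂ x 0 := by
  simp only [dbar, sub_zero]
  exact le_max_of_le_right (le_max_left _ _)

lemma dbar_le (t₁ t₂ x : ℝ) : dbar t₁ t₂ x 0 ≤ |x| + (|t₁| + |t₂|) := by
  simp only [dbar, sub_zero]
  have h1 : |x - t₁| ≤ |x| + |t₁| := abs_sub _ _
  have h2 : |x + t₂| ≤ |x| + |t₂| := abs_add_le _ _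
  have := abs_nonneg t₁
  have := abs_nonneg t₂
  refine max_le (by linarith) (max_le (by linarith) (by linarith))

/-- A sequence is in `linfF` iff it is bounded. -/
lemma mem_linfF_of_bound {t₁ t₂ : ℝ} {u : ℕ → ℝ} {B : ℝ} (hB : ∀ k, |u k| ≤ B) :
    u ∈ linfF t₁ t₂ :=
  ⟨B + (|t₁| + |t₂|), fun k =>
    le_trans (dbar_le t₁ t₂ (u k)) (by have := hB k; linarith)⟩

lemma bound_of_mem_linfF {t₁ t₂ : ℝ} {u : ℕ → ℝ} (hu : u ∈ linfF t₁ t₂) :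
    ∃ B : ℝ, ∀ k, |u k| ≤ B := by
  obtain ⟨M, hM⟩ := hu
  exact ⟨M, fun k => le_trans (abs_le_dbar t₁ t₂ (u k)) (hM k)⟩

/-- The continuous linear functional on `ℓ∞` given by an absolutely summable row. -/
noncomputable def rowCLM (a : ℕ → ℝ) (ha : Summable fun k => |a k|) :
    lp (fun _ : ℕ => ℝ) ∞ →L[ℝ] ℝ :=
  LinearMap.mkContinuous
    { toFun := fun u => ∑' k, a k * u k
      map_add' := by
        intro u v
        have hs : ∀ w : lp (fun _ : ℕ => ℝ) ∞, Summable fun k => a k * w k := by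
          intro w
          refine Summable.of_norm_bounded (ha.mul_right ‖w‖) fun k => ?_
          rw [Real.norm_eq_abs, abs_mul]
          exact mul_le_mul_of_nonneg_left
            (lp.norm_apply_le_norm ENNReal.top_ne_zero w k) (abs_nonneg _)
        show (∑' k, a k * (u + v) k) = (∑' k, a k * u k) + ∑' k, a k * v k
        have heq : (fun k => a k * (u + v) k) = fun k => a k * u k + a k * v k := by
          funext k
          have : (u + v) k = u k + v k := rfl
          rw [this]; ring
        rw [heq, Summable.tsum_add (hs u) (hs v)]
      map_smul' := by
        intro c u
        show (∑' k, a k * (c • u) k) = (RingHom.id ℝ) c • ∑' k, a k * u k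
        have heq : (fun k => a k * (c • u) k) = fun k => c * (a k * u k) := by
          funext k
          have : (c • u) k = c * u k := rfl
          rw [this]; ring
        rw [heq, tsum_mul_left]
        rfl }
    (∑' k, |a k|)
    (by
      intro u
      have hs : Summable fun k => a k * u k := by
        refine Summable.of_norm_bounded (ha.mul_right ‖u‖) fun k => ?_
        rw [Real.norm_eq_abs, abs_mul]
        exact mul_le_mul_of_nonneg_left
          (lp.norm_apply_le_norm ENNReal.top_ne_zero u k) (abs_nonneg _)
      calc ‖∑' k, a k * u k‖ ≤ ∑' k, ‖a k * u k‖ :=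
            norm_tsum_le_tsum_norm (by simpa only [Real.norm_eq_abs] using hs.abs)
        _ ≤ ∑' k, |a k| * ‖u‖ := by
            refine Summable.tsum_le_tsum (fun k => ?_) (by simpa only [Real.norm_eq_abs] using hs.abs) (ha.mul_right ‖u‖)
            rw [Real.norm_eq_abs, abs_mul]
            exact mul_le_mul_of_nonneg_left
              (lp.norm_apply_le_norm ENNReal.top_ne_zero u k) (abs_nonneg _)
        _ = (∑' k, |a k|) * ‖u‖ := tsum_mul_right)

/-- `A ∈ (ℓ∞(F) : ℓ∞(F))` if and only if `sup_n Σ_k |a_{nk}| < ∞`. -/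
theorem matrix_linf_to_linf (t₁ t₂ : ℝ) (h : t₁ ≤ t₂) (a : ℕ → ℕ → ℝ) :
    (∀ u ∈ linfF t₁ t₂, (∀ n, Summable fun k => a n k * u k) ∧
      (fun n => ∑' k, a n k * u k) ∈ linfF t₁ t₂) ↔
    (∃ M : ℝ, ∀ n, (Summable fun k => |a n k|) ∧ (∑' k, |a n k|) ≤ M) := by
  constructor
  · intro H
    -- sign sequences
    set s : ℕ → ℕ → ℝ := fun n k => if 0 ≤ a n k then 1 else -1 with hs_def
    have hs_abs : ∀ n k, |s n k| ≤ 1 := by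
      intro n k
      by_cases hk : 0 ≤ a n k <;> simp [hs_def, hk]
    have hs_mul : ∀ n k, a n k * s n k = |a n k| := by
      intro n k
      by_cases hk : 0 ≤ a n k
      · simp [hs_def, hk, abs_of_nonneg hk]
      · simp [hs_def, hk, abs_of_neg (lt_of_not_ge hk)]
    -- Step 1: each row is absolutely summable
    have hrow : ∀ n, Summable fun k => |a n k| := by
      intro n
      have hmem : s n ∈ linfF t₁ t₂ := mem_linfF_of_bound (hs_abs n)
      have := (H (s n) hmem).1 n
      simpa only [hs_mul n] using this
    -- Step 2: Banach–Steinhaus for the row functionals on ℓ∞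
    set T : ℕ → lp (fun _ : ℕ => ℝ) ∞ →L[ℝ] ℝ := fun n => rowCLM (a n) (hrow n) with hT
    have hBS : ∀ x : lp (fun _ : ℕ => ℝ) ∞, ∃ C, ∀ n, ‖T n x‖ ≤ C := by
      intro x
      have hxmem : (fun k => x k) ∈ linfF t₁ t₂ :=
        mem_linfF_of_bound (B := ‖x‖) fun k =>
          lp.norm_apply_le_norm ENNReal.top_ne_zero x k
      obtain ⟨M', hM'⟩ := (H (fun k => x k) hxmem).2
      refine ⟨M', fun n => ?_⟩
      have : ‖T n x‖ = |∑' k, a n k * x k| := rfl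
      rw [this]
      exact le_trans (abs_le_dbar t₁ t₂ _) (hM' n)
    obtain ⟨C', hC'⟩ := banach_steinhaus hBS
    refine ⟨C', fun n => ⟨hrow n, ?_⟩⟩
    -- evaluate T n at the sign sequence
    have hsn : Memℓp (s n) ∞ :=
      memℓp_infty ⟨1, by rintro x ⟨k, rfl⟩; exact hs_abs n k⟩
    set sn : lp (fun _ : ℕ => ℝ) ∞ := ⟨s n, hsn⟩ with hsn_def
    have hsnorm : ‖sn‖ ≤ 1 :=
      lp.norm_le_of_forall_le zero_le_one fun k => hs_abs n k
    have hval : T n sn = ∑' k, |a n k| := by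
      have : T n sn = ∑' k, a n k * s n k := rfl
      rw [this]
      exact tsum_congr (hs_mul n)
    calc (∑' k, |a n k|) = T n sn := hval.symm
      _ ≤ ‖T n sn‖ := le_abs_self _
      _ ≤ ‖T n‖ * ‖sn‖ := (T n).le_opNorm sn
      _ ≤ C' * 1 := mul_le_mul (hC' n) hsnorm (norm_nonneg _)
            (le_trans (norm_nonneg _) (hC' n))
      _ = C' := mul_one _
  · rintro ⟨M, hM⟩ u hu
    obtain ⟨B, hB⟩ := bound_of_mem_linfF hu
    have hB0 : 0 ≤ B := le_trans (abs_nonneg _) (hB 0)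
    have hsum : ∀ n, Summable fun k => a n k * u k := by
      intro n
      refine Summable.of_norm_bounded ((hM n).1.mul_right B) fun k => ?_
      rw [Real.norm_eq_abs, abs_mul]
      exact mul_le_mul_of_nonneg_left (hB k) (abs_nonneg _)
    refine ⟨hsum, ?_⟩
    refine mem_linfF_of_bound (B := M * B) fun n => ?_
    calc |∑' k, a n k * u k| ≤ ∑' k, |a n k * u k| := by
          simpa only [Real.norm_eq_abs] using norm_tsum_le_tsum_norm (f := fun k => a n k * u k)
            (by simpa only [Real.norm_eq_abs] using (hsum n).abs)
      _ ≤ ∑' k, |a n k| * B := by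
          refine Summable.tsum_le_tsum (fun k => ?_) (by simpa only [Real.norm_eq_abs] using (hsum n).abs)
            ((hM n).1.mul_right B)
          rw [abs_mul]
          exact mul_le_mul_of_nonneg_left (hB k) (abs_nonneg _)
      _ = (∑' k, |a n k|) * B := tsum_mul_right
      _ ≤ M * B := mul_le_mul_of_nonneg_right (hM n).2 hB0
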